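/- Let (G,Λ) be a pseudo free self-similar k-graph such that g·v = v for all g ∈ G and v ∈ Λ^0, and let T be a maximal tail of Λ. If every cycline triple of (G, ΛT) is a cycline pair of (G, ΛT), then every cycline triple of (G, H_T ΛT) is a cycline pair of (G, H_T ΛT). -/
import Mathlib


/-- A `k`-graph: a countable small category equipped with a degree functor
`d : Λ → ℕ^k` satisfying the unique factorization property.  Objects are
identified with their identity morphisms (the degree-zero paths);
`comp μ ν` is the composite `μν` (a junk value when `s μ ≠ r ν`). -/
structure KGraph (k : ℕ) where
  Path : Type
  countable : Countable Path
  r : Path → Path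
  s : Path → Path
  d : Path → Fin k → ℕ
  comp : Path → Path → Path
  d_r : ∀ μ, d (r μ) = 0
  d_s : ∀ μ, d (s μ) = 0
  r_r : ∀ μ, r (r μ) = r μ
  s_r : ∀ μ, s (r μ) = r μ
  r_s : ∀ μ, r (s μ) = s μ
  s_s : ∀ μ, s (s μ) = s μ
  eq_r_of_d_eq_zero : ∀ μ, d μ = 0 → μ = r μ
  comp_id : ∀ μ, comp μ (s μ) = μ
  id_comp : ∀ μ, comp (r μ) μ = μ
  r_comp : ∀ μ ν, s μ = r ν → r (comp μ ν) = r μ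
  s_comp : ∀ μ ν, s μ = r ν → s (comp μ ν) = s ν
  d_comp : ∀ μ ν, s μ = r ν → d (comp μ ν) = d μ + d ν
  comp_assoc : ∀ μ ν ξ, s μ = r ν → s ν = r ξ →
    comp (comp μ ν) ξ = comp μ (comp ν ξ)
  factor : ∀ μ p q, d μ = p + q →
    ∃! αβ : Path × Path, s αβ.1 = r αβ.2 ∧ d αβ.1 = p ∧ d αβ.2 = q ∧
      comp αβ.1 αβ.2 = μ

namespace KGraph

variable {k : ℕ} (Λ : KGraph k)

/-- The vertices of a `k`-graph are the degree-zero paths. -/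
def IsVertex (v : Λ.Path) : Prop := Λ.d v = 0

/-- `Λ` is row-finite if `|v Λ^p| < ∞` for every vertex `v` and `p ∈ ℕ^k`. -/
def RowFinite : Prop :=
  ∀ v, Λ.IsVertex v → ∀ p : Fin k → ℕ, {μ | Λ.r μ = v ∧ Λ.d μ = p}.Finite

/-- `Λ` is source-free if `v Λ^p ≠ ∅` for every vertex `v` and `p ∈ ℕ^k`. -/
def SourceFree : Prop :=
  ∀ v, Λ.IsVertex v → ∀ p : Fin k → ℕ, ∃ μ, Λ.r μ = v ∧ Λ.d μ = p

/-- `ΛT`, the set of paths of `Λ` whose source lies in `T`. -/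
def tailPaths (T : Set Λ.Path) : Set Λ.Path := {μ | Λ.s μ ∈ T}

/-- `H Λ T`, the set of paths with source in `T` and range in `H`. -/
def cornerPaths (T H : Set Λ.Path) : Set Λ.Path := {μ | Λ.s μ ∈ T ∧ Λ.r μ ∈ H}

end KGraph

/-- A maximal tail of a `k`-graph. -/
structure MaximalTail {k : ℕ} (Λ : KGraph k) (T : Set Λ.Path) : Prop where
  nonempty : T.Nonempty
  vertex : ∀ v ∈ T, Λ.IsVertex v
  backward_closed : ∀ w, Λ.IsVertex w → ∀ v ∈ T, (∃ μ, Λ.r μ = w ∧ Λ.s μ = v) → w ∈ T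
  reaches : ∀ v ∈ T, ∀ p : Fin k → ℕ, ∃ μ, Λ.r μ = v ∧ Λ.d μ = p ∧ Λ.s μ ∈ T
  directed : ∀ v₁ ∈ T, ∀ v₂ ∈ T, ∃ w ∈ T,
    (∃ μ, Λ.r μ = v₁ ∧ Λ.s μ = w) ∧ (∃ ν, Λ.r ν = v₂ ∧ Λ.s ν = w)

/-- An infinite path of a `k`-graph, i.e. a degree-preserving functor
`x : Ω_k → Λ`; here `val p n` records the segment `x(p, p + n)`. -/
structure InfPath {k : ℕ} (Λ : KGraph k) where
  val : (Fin k → ℕ) → (Fin k → ℕ) → Λ.Path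
  d_val : ∀ p n, Λ.d (val p n) = n
  r_val : ∀ p n, Λ.r (val p n) = val p 0
  s_val : ∀ p n, Λ.s (val p n) = val (p + n) 0
  comp_val : ∀ p m n, Λ.comp (val p m) (val (p + m) n) = val p (m + n)

namespace InfPath

variable {k : ℕ} {Λ : KGraph k}

/-- The shift `σ^n x` of an infinite path. -/
def shift (x : InfPath Λ) (n : Fin k → ℕ) : InfPath Λ where
  val p m := x.val (p + n) m
  d_val p m := x.d_val _ _
  r_val p m := x.r_val _ _
  s_val p m := by rw [x.s_val, add_right_comm]
  comp_val p m m' := by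
    show Λ.comp (x.val (p + n) m) (x.val (p + m + n) m') = x.val (p + n) (m + m')
    rw [add_right_comm p m n]; exact x.comp_val (p + n) m m'

/-- An infinite path lies in the subgraph determined by the set of paths `P`
if all of its segments lie in `P`. -/
def inSub (P : Set Λ.Path) (x : InfPath Λ) : Prop := ∀ p n, x.val p n ∈ P

end InfPath

/-- `z = μ x`: `z` is the infinite path obtained by prepending the finite
path `μ` to the infinite path `x` (which requires `s μ = x(0,0)`). -/
def KGraph.IsExtension {k : ℕ} (Λ : KGraph k) (μ : Λ.Path) (x z : InfPath Λ) : Prop :=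
  Λ.s μ = x.val 0 0 ∧ ∀ n, z.val 0 (Λ.d μ + n) = Λ.comp μ (x.val 0 n)

/-- A cycline pair `(μ, 1, ν)` of the subgraph of `Λ` determined by the set of
paths `P`: `s μ = s ν` and `μ x = ν x` for every infinite path `x` of the
subgraph with range `s ν`. -/
def KGraph.IsCyclinePair {k : ℕ} (Λ : KGraph k) (P : Set Λ.Path) (μ ν : Λ.Path) : Prop :=
  μ ∈ P ∧ ν ∈ P ∧ Λ.s μ = Λ.s ν ∧
    ∀ x : InfPath Λ, x.inSub P →
      ∀ z : InfPath Λ, Λ.IsExtension ν x z → Λ.IsExtension μ x z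

/-- `Per_Γ` for the subgraph `Γ` of `Λ` determined by `P`:
the set of all `d μ − d ν` over cycline pairs `(μ, 1, ν)`. -/
def KGraph.PerPair {k : ℕ} (Λ : KGraph k) (P : Set Λ.Path) : Set (Fin k → ℤ) :=
  {m | ∃ μ ν, Λ.IsCyclinePair P μ ν ∧ m = fun i => (Λ.d μ i : ℤ) - (Λ.d ν i : ℤ)}

/-- A self-similar `k`-graph `(G, Λ)`: an action of the countable discrete
group `G` on `Λ` together with a restriction map `(g, μ) ↦ g|_μ`. -/
structure SelfSimilarSys (k : ℕ) (G : Type) [Group G] [Countable G] (Λ : KGraph k) where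
  act : G → Λ.Path → Λ.Path
  res : G → Λ.Path → G
  act_one : ∀ μ, act 1 μ = μ
  act_mul : ∀ g h μ, act (g * h) μ = act g (act h μ)
  d_act : ∀ g μ, Λ.d (act g μ) = Λ.d μ
  s_act : ∀ g μ, Λ.s (act g μ) = act g (Λ.s μ)
  r_act : ∀ g μ, Λ.r (act g μ) = act g (Λ.r μ)
  act_comp : ∀ g μ ν, Λ.s μ = Λ.r ν →
    act g (Λ.comp μ ν) = Λ.comp (act g μ) (act (res g μ) ν)
  res_vertex : ∀ g v, Λ.IsVertex v → res g v = g
  res_comp : ∀ g μ ν, Λ.s μ = Λ.r ν → res g (Λ.comp μ ν) = res (res g μ) ν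
  res_one : ∀ μ, res 1 μ = 1
  res_mul : ∀ g h μ, res (g * h) μ = res g (act h μ) * res h μ

namespace SelfSimilarSys

variable {k : ℕ} {G : Type} [Group G] [Countable G] {Λ : KGraph k}

/-- `(G, Λ)` is pseudo free: `g·μ = μ` and `g|_μ = 1` imply `g = 1`. -/
def PseudoFree (S : SelfSimilarSys k G Λ) : Prop :=
  ∀ g μ, S.act g μ = μ → S.res g μ = 1 → g = 1

/-- `y = g · x` for infinite paths: `y(0, n) = g · x(0, n)` for all `n`. -/
def IsGAct (S : SelfSimilarSys k G Λ) (g : G) (x y : InfPath Λ) : Prop :=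
  ∀ n, y.val 0 n = S.act g (x.val 0 n)

/-- A cycline triple `(μ, g, ν)` of the subgraph of `Λ` determined by `P`:
`s μ = g · s ν` and `μ (g · x) = ν x` for every infinite path `x` of the
subgraph with range `s ν`. -/
def IsCyclineTriple (S : SelfSimilarSys k G Λ) (P : Set Λ.Path)
    (μ : Λ.Path) (g : G) (ν : Λ.Path) : Prop :=
  μ ∈ P ∧ ν ∈ P ∧ Λ.s μ = S.act g (Λ.s ν) ∧
    ∀ x : InfPath Λ, x.inSub P → Λ.s ν = x.val 0 0 →
      ∀ y : InfPath Λ, S.IsGAct g x y →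
        ∀ z : InfPath Λ, Λ.IsExtension ν x z → Λ.IsExtension μ y z

/-- `Per_{G,Γ}` for the subgraph `Γ` of `Λ` determined by `P`:
the set of all `d μ − d ν` over cycline triples `(μ, g, ν)`. -/
def PerTriple (S : SelfSimilarSys k G Λ) (P : Set Λ.Path) : Set (Fin k → ℤ) :=
  {m | ∃ μ g ν, S.IsCyclineTriple P μ g ν ∧ m = fun i => (Λ.d μ i : ℤ) - (Λ.d ν i : ℤ)}

/-- Membership `y ∈ [x]`: `y` is an infinite path of `ΛT` and
`σ^p x = g · σ^q y` for some `p, q ∈ ℕ^k` and `g ∈ G`. -/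
def ClassMem (S : SelfSimilarSys k G Λ) (T : Set Λ.Path) (x y : InfPath Λ) : Prop :=
  y.inSub (Λ.tailPaths T) ∧ ∃ p q : Fin k → ℕ, ∃ g : G, S.IsGAct g (y.shift q) (x.shift p)

end SelfSimilarSys

/-- `H_T`: the vertices `v ∈ T` such that for all `p, q ∈ ℕ^k` with
`p − q ∈ Per_{ΛT}` and every `μ ∈ v Λ^p T` there is a unique `ν ∈ v Λ^q T`
with `(μ, 1, ν)` a cycline pair of `ΛT`. -/
def KGraph.HSet {k : ℕ} (Λ : KGraph k) (T : Set Λ.Path) : Set Λ.Path :=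
  {v | v ∈ T ∧ ∀ p q : Fin k → ℕ,
    (fun i => (p i : ℤ) - (q i : ℤ)) ∈ Λ.PerPair (Λ.tailPaths T) →
      ∀ μ, Λ.r μ = v → Λ.d μ = p → Λ.s μ ∈ T →
        ∃! ν, Λ.r ν = v ∧ Λ.d ν = q ∧ Λ.IsCyclinePair (Λ.tailPaths T) μ ν}

namespace KGraph

variable {k : ℕ} {Λ : KGraph k}

lemma s_vertex {v : Λ.Path} (h : Λ.d v = 0) : Λ.s v = v := by
  have hv := Λ.eq_r_of_d_eq_zero v h
  calc Λ.s v = Λ.s (Λ.r v) := by rw [← hv]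
    _ = Λ.r v := Λ.s_r v
    _ = v := hv.symm

lemma comp_inj {a b a' b' : Λ.Path} (h1 : Λ.s a = Λ.r b) (h2 : Λ.s a' = Λ.r b')
    (hda : Λ.d a = Λ.d a') (hdb : Λ.d b = Λ.d b') (h : Λ.comp a b = Λ.comp a' b') :
    a = a' ∧ b = b' := by
  obtain ⟨ab, -, hu⟩ := Λ.factor (Λ.comp a b) (Λ.d a) (Λ.d b) (Λ.d_comp a b h1)
  have e1 := hu (a, b) ⟨h1, rfl, rfl, rfl⟩
  have e2 := hu (a', b') ⟨h2, hda.symm, hdb.symm, h.symm⟩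
  have e := e1.trans e2.symm
  exact ⟨congrArg Prod.fst e, congrArg Prod.snd e⟩

lemma seg_exists (W : Λ.Path) (p n t : Fin k → ℕ) (h : Λ.d W = p + n + t) :
    ∃ C A B : Λ.Path, Λ.d A = p ∧ Λ.d C = n ∧ Λ.d B = t ∧
      Λ.s A = Λ.r C ∧ Λ.s C = Λ.r B ∧ Λ.comp (Λ.comp A C) B = W := by
  obtain ⟨⟨A, D⟩, ⟨hAD, hdA, hdD, hcomp⟩, -⟩ := Λ.factor W p (n + t) (by rw [h, add_assoc])
  obtain ⟨⟨C, B⟩, ⟨hCB, hdC, hdB, hcomp2⟩, -⟩ := Λ.factor D n t hdD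
  have h1 : Λ.s A = Λ.r C := by
    rw [← hcomp2, Λ.r_comp C B hCB] at hAD; exact hAD
  exact ⟨C, A, B, hdA, hdC, hdB, h1, hCB, by
    rw [Λ.comp_assoc A C B h1 hCB, hcomp2, hcomp]⟩

noncomputable def seg (W : Λ.Path) (p n t : Fin k → ℕ) (h : Λ.d W = p + n + t) : Λ.Path :=
  (seg_exists W p n t h).choose

lemma seg_spec (W : Λ.Path) (p n t : Fin k → ℕ) (h : Λ.d W = p + n + t) :
    ∃ A B : Λ.Path, Λ.d A = p ∧ Λ.d (seg W p n t h) = n ∧ Λ.d B = t ∧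
      Λ.s A = Λ.r (seg W p n t h) ∧ Λ.s (seg W p n t h) = Λ.r B ∧
      Λ.comp (Λ.comp A (seg W p n t h)) B = W :=
  (seg_exists W p n t h).choose_spec

lemma seg_d (W : Λ.Path) (p n t : Fin k → ℕ) (h : Λ.d W = p + n + t) :
    Λ.d (seg W p n t h) = n := by
  obtain ⟨A, B, -, hd, -⟩ := seg_spec W p n t h
  exact hd

lemma seg_unique (W : Λ.Path) (p n t : Fin k → ℕ) (h : Λ.d W = p + n + t)
    {A C B : Λ.Path} (hdA : Λ.d A = p) (hdC : Λ.d C = n) (hdB : Λ.d B = t)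
    (h1 : Λ.s A = Λ.r C) (h2 : Λ.s C = Λ.r B) (hW : Λ.comp (Λ.comp A C) B = W) :
    seg W p n t h = C := by
  obtain ⟨A', B', hdA', hdC', hdB', h1', h2', hW'⟩ := seg_spec W p n t h
  obtain ⟨ab, -, hu⟩ := Λ.factor W p (n + t) (by rw [h, add_assoc])
  have m1 := hu (A, Λ.comp C B) ⟨by rw [Λ.r_comp C B h2]; exact h1, hdA,
    by rw [Λ.d_comp C B h2, hdC, hdB], by rw [← Λ.comp_assoc A C B h1 h2]; exact hW⟩
  have m2 := hu (A', Λ.comp (seg W p n t h) B') ⟨by rw [Λ.r_comp _ B' h2']; exact h1', hdA',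
    by rw [Λ.d_comp _ B' h2', hdC', hdB'], by rw [← Λ.comp_assoc A' _ B' h1' h2']; exact hW'⟩
  have e : Λ.comp C B = Λ.comp (seg W p n t h) B' := congrArg Prod.snd (m1.trans m2.symm)
  exact ((comp_inj h2 h2' (hdC.trans hdC'.symm) (hdB.trans hdB'.symm) e).1).symm

lemma seg_init (W : Λ.Path) (n t : Fin k → ℕ) (h : Λ.d W = 0 + n + t)
    {C B : Λ.Path} (hdC : Λ.d C = n) (hdB : Λ.d B = t)
    (h2 : Λ.s C = Λ.r B) (hW : Λ.comp C B = W) :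
    seg W 0 n t h = C :=
  seg_unique W 0 n t h (Λ.d_r C) hdC hdB (Λ.s_r C) h2 (by rw [Λ.id_comp C]; exact hW)

section Chain

lemma chain_d_mono (c : ℕ → Λ.Path)
    (hc : ∀ j, ∃ e, Λ.s (c j) = Λ.r e ∧ c (j + 1) = Λ.comp (c j) e)
    {j j' : ℕ} (hjj : j ≤ j') : ∀ i, Λ.d (c j) i ≤ Λ.d (c j') i := by
  induction hjj with
  | refl => exact fun i => le_rfl
  | step h ih =>
    rename_i m
    obtain ⟨e, hse, hcomp⟩ := hc m
    intro i
    rw [hcomp, Λ.d_comp _ _ hse]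
    have := ih i
    simp only [Pi.add_apply]
    omega

lemma seg_step (c : ℕ → Λ.Path)
    (hc : ∀ j, ∃ e, Λ.s (c j) = Λ.r e ∧ c (j + 1) = Λ.comp (c j) e)
    (j : ℕ) {p n t t' : Fin k → ℕ}
    (h : Λ.d (c j) = p + n + t) (h' : Λ.d (c (j + 1)) = p + n + t') :
    seg (c j) p n t h = seg (c (j + 1)) p n t' h' := by
  obtain ⟨e, hse, hcomp⟩ := hc j
  obtain ⟨A, B, hdA, hdC, hdB, h1, h2, hW⟩ := seg_spec (c j) p n t h
  have h2' : Λ.s (Λ.comp A (seg (c j) p n t h)) = Λ.r B := by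
    rw [Λ.s_comp A _ h1]; exact h2
  have hsB : Λ.s B = Λ.r e := by
    rw [← hW, Λ.s_comp _ B h2'] at hse; exact hse
  have hdt : t' = t + Λ.d e := by
    have hdj : Λ.d (c (j + 1)) = p + n + (t + Λ.d e) := by
      rw [hcomp, Λ.d_comp _ _ hse, h, add_assoc]
    exact add_left_cancel (h'.symm.trans hdj)
  have hW' : Λ.comp (Λ.comp A (seg (c j) p n t h)) (Λ.comp B e) = c (j + 1) := by
    rw [← Λ.comp_assoc _ B e h2' hsB, hW]; exact hcomp.symm
  exact (seg_unique (c (j + 1)) p n t' h' hdA hdC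
    (by rw [Λ.d_comp B e hsB, hdB, hdt]) h1
    (by rw [Λ.r_comp B e hsB]; exact h2) hW').symm

lemma seg_chain_le (c : ℕ → Λ.Path)
    (hc : ∀ j, ∃ e, Λ.s (c j) = Λ.r e ∧ c (j + 1) = Λ.comp (c j) e)
    {j j' : ℕ} (hjj : j ≤ j') {p n t : Fin k → ℕ}
    (h : Λ.d (c j) = p + n + t) :
    ∀ t' (h' : Λ.d (c j') = p + n + t'),
      seg (c j) p n t h = seg (c j') p n t' h' := by
  induction j', hjj using Nat.le_induction with
  | base =>
    intro t' h'
    obtain rfl : t = t' := add_left_cancel (h.symm.trans h')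
    rfl
  | succ m hm ih =>
    intro t' h'
    have hb : ∀ i, p i + n i ≤ Λ.d (c m) i := by
      intro i
      have h0 : Λ.d (c j) i = p i + n i + t i := by rw [h]; simp [Pi.add_apply]
      have := chain_d_mono c hc hm i
      omega
    have h'' : Λ.d (c m) = p + n + fun i => Λ.d (c m) i - (p i + n i) := by
      funext i; simp only [Pi.add_apply]; have := hb i; omega
    exact (ih _ h'').trans (seg_step c hc m h'' h')

lemma seg_chain (c : ℕ → Λ.Path)
    (hc : ∀ j, ∃ e, Λ.s (c j) = Λ.r e ∧ c (j + 1) = Λ.comp (c j) e)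
    {j j' : ℕ} {p n t t' : Fin k → ℕ}
    (h : Λ.d (c j) = p + n + t) (h' : Λ.d (c j') = p + n + t') :
    seg (c j) p n t h = seg (c j') p n t' h' := by
  rcases le_total j j' with hle | hle
  · exact seg_chain_le c hc hle h t' h'
  · exact (seg_chain_le c hc hle h' t h).symm

noncomputable def chainVal (c : ℕ → Λ.Path)
    (hcof : ∀ m : Fin k → ℕ, ∃ j, ∀ i, m i ≤ Λ.d (c j) i)
    (p n : Fin k → ℕ) : Λ.Path :=
  seg (c (hcof (p + n)).choose) p n
    (fun i => Λ.d (c (hcof (p + n)).choose) i - (p i + n i))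
    (by funext i
        have := (hcof (p + n)).choose_spec i
        simp only [Pi.add_apply] at this ⊢
        omega)

lemma chainVal_eq (c : ℕ → Λ.Path)
    (hc : ∀ j, ∃ e, Λ.s (c j) = Λ.r e ∧ c (j + 1) = Λ.comp (c j) e)
    (hcof : ∀ m : Fin k → ℕ, ∃ j, ∀ i, m i ≤ Λ.d (c j) i)
    (p n : Fin k → ℕ) (j : ℕ) (t : Fin k → ℕ) (h : Λ.d (c j) = p + n + t) :
    chainVal c hcof p n = seg (c j) p n t h := by
  unfold chainVal
  exact seg_chain c hc _ h

lemma chainVal_d (c : ℕ → Λ.Path)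
    (hcof : ∀ m : Fin k → ℕ, ∃ j, ∀ i, m i ≤ Λ.d (c j) i)
    (p n : Fin k → ℕ) : Λ.d (chainVal c hcof p n) = n := by
  unfold chainVal
  exact seg_d _ _ _ _ _

lemma chainVal_r (c : ℕ → Λ.Path)
    (hc : ∀ j, ∃ e, Λ.s (c j) = Λ.r e ∧ c (j + 1) = Λ.comp (c j) e)
    (hcof : ∀ m : Fin k → ℕ, ∃ j, ∀ i, m i ≤ Λ.d (c j) i)
    (p n : Fin k → ℕ) : Λ.r (chainVal c hcof p n) = chainVal c hcof p 0 := by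
  obtain ⟨j, hj⟩ := hcof (p + n)
  have h : Λ.d (c j) = p + n + fun i => Λ.d (c j) i - (p i + n i) := by
    funext i; have := hj i; simp only [Pi.add_apply] at this ⊢; omega
  set t : Fin k → ℕ := fun i => Λ.d (c j) i - (p i + n i) with ht
  have h0 : Λ.d (c j) = p + 0 + (n + t) := by rw [h]; abel
  rw [chainVal_eq c hc hcof p n j t h, chainVal_eq c hc hcof p 0 j (n + t) h0]
  obtain ⟨A, B, hdA, hdC, hdB, h1, h2, hW⟩ := seg_spec (c j) p n t h
  set C := seg (c j) p n t h with hC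
  have hAC : Λ.comp A (Λ.r C) = A := by rw [← h1, Λ.comp_id]
  refine (seg_unique (c j) p 0 (n + t) h0 hdA (Λ.d_r C)
    (by rw [Λ.d_comp C B h2, hdC, hdB]) (by rw [Λ.r_r]; exact h1)
    (by rw [Λ.s_r, Λ.r_comp C B h2]) ?_).symm
  rw [hAC, ← Λ.comp_assoc A C B h1 h2]
  exact hW

lemma chainVal_s (c : ℕ → Λ.Path)
    (hc : ∀ j, ∃ e, Λ.s (c j) = Λ.r e ∧ c (j + 1) = Λ.comp (c j) e)
    (hcof : ∀ m : Fin k → ℕ, ∃ j, ∀ i, m i ≤ Λ.d (c j) i)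
    (p n : Fin k → ℕ) : Λ.s (chainVal c hcof p n) = chainVal c hcof (p + n) 0 := by
  obtain ⟨j, hj⟩ := hcof (p + n)
  have h : Λ.d (c j) = p + n + fun i => Λ.d (c j) i - (p i + n i) := by
    funext i; have := hj i; simp only [Pi.add_apply] at this ⊢; omega
  set t : Fin k → ℕ := fun i => Λ.d (c j) i - (p i + n i) with ht
  have h0 : Λ.d (c j) = (p + n) + 0 + t := by rw [h]; abel
  rw [chainVal_eq c hc hcof p n j t h, chainVal_eq c hc hcof (p + n) 0 j t h0]
  obtain ⟨A, B, hdA, hdC, hdB, h1, h2, hW⟩ := seg_spec (c j) p n t h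
  set C := seg (c j) p n t h with hC
  have h1' : Λ.s (Λ.comp A C) = Λ.r (Λ.s C) := by rw [Λ.s_comp A C h1, Λ.r_s]
  have hACs : Λ.comp (Λ.comp A C) (Λ.s C) = Λ.comp A C := by
    rw [← Λ.s_comp A C h1, Λ.comp_id]
  refine (seg_unique (c j) (p + n) 0 t h0
    (by rw [Λ.d_comp A C h1, hdA, hdC]) (Λ.d_s C) hdB h1'
    (by rw [Λ.s_s]; exact h2) ?_).symm
  rw [hACs]
  exact hW

lemma chainVal_comp (c : ℕ → Λ.Path)
    (hc : ∀ j, ∃ e, Λ.s (c j) = Λ.r e ∧ c (j + 1) = Λ.comp (c j) e)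
    (hcof : ∀ m : Fin k → ℕ, ∃ j, ∀ i, m i ≤ Λ.d (c j) i)
    (p m n : Fin k → ℕ) :
    Λ.comp (chainVal c hcof p m) (chainVal c hcof (p + m) n) = chainVal c hcof p (m + n) := by
  obtain ⟨j, hj⟩ := hcof (p + m + n)
  have hb : ∀ i, p i + m i + n i ≤ Λ.d (c j) i := by
    intro i; have := hj i; simp only [Pi.add_apply] at this; omega
  have hA : Λ.d (c j) = p + (m + n) + fun i => Λ.d (c j) i - (p i + m i + n i) := by
    funext i; simp only [Pi.add_apply]; have := hb i; omega
  have hB : Λ.d (c j) = p + m + fun i => Λ.d (c j) i - (p i + m i) := by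
    funext i; simp only [Pi.add_apply]; have := hb i; omega
  have hC : Λ.d (c j) = (p + m) + n + fun i => Λ.d (c j) i - (p i + m i + n i) := by
    funext i; simp only [Pi.add_apply]; have := hb i; omega
  rw [chainVal_eq c hc hcof p m j _ hB, chainVal_eq c hc hcof (p + m) n j _ hC,
    chainVal_eq c hc hcof p (m + n) j _ hA]
  obtain ⟨A, B, hdA, hdC0, hdB, h1, h2, hW⟩ := seg_spec (c j) p (m + n) _ hA
  set C := seg (c j) p (m + n) _ hA with hCdef
  obtain ⟨⟨C₁, C₂⟩, ⟨hs12, hd1, hd2, h12⟩, -⟩ := Λ.factor C m n hdC0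
  have hsC2B : Λ.s C₂ = Λ.r B := by rw [← Λ.s_comp C₁ C₂ hs12, h12]; exact h2
  have hrC1 : Λ.s A = Λ.r C₁ := by rw [← Λ.r_comp C₁ C₂ hs12, h12]; exact h1
  have hnt : Λ.d (Λ.comp C₂ B) = fun i => Λ.d (c j) i - (p i + m i) := by
    rw [Λ.d_comp C₂ B hsC2B, hd2, hdB]
    funext i; simp only [Pi.add_apply]; have := hb i; omega
  have e1 : seg (c j) p m _ hB = C₁ := by
    refine seg_unique (c j) p m _ hB hdA hd1 hnt hrC1
      (by rw [Λ.r_comp C₂ B hsC2B]; exact hs12) ?_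
    rw [← Λ.comp_assoc (Λ.comp A C₁) C₂ B (by rw [Λ.s_comp A C₁ hrC1]; exact hs12) hsC2B,
      Λ.comp_assoc A C₁ C₂ hrC1 hs12, h12]
    exact hW
  have e2 : seg (c j) (p + m) n _ hC = C₂ := by
    refine seg_unique (c j) (p + m) n _ hC
      (by rw [Λ.d_comp A C₁ hrC1, hdA, hd1]) hd2 hdB
      (by rw [Λ.s_comp A C₁ hrC1]; exact hs12) hsC2B ?_
    rw [Λ.comp_assoc A C₁ C₂ hrC1 hs12, h12]
    exact hW
  rw [e1, e2, h12]

lemma chainVal_s_mem {T : Set Λ.Path} (hT : MaximalTail Λ T) (c : ℕ → Λ.Path)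
    (hc : ∀ j, ∃ e, Λ.s (c j) = Λ.r e ∧ c (j + 1) = Λ.comp (c j) e)
    (hcof : ∀ m : Fin k → ℕ, ∃ j, ∀ i, m i ≤ Λ.d (c j) i)
    (hsc : ∀ j, Λ.s (c j) ∈ T) (p n : Fin k → ℕ) :
    Λ.s (chainVal c hcof p n) ∈ T := by
  obtain ⟨j, hj⟩ := hcof (p + n)
  have h : Λ.d (c j) = p + n + fun i => Λ.d (c j) i - (p i + n i) := by
    funext i; have := hj i; simp only [Pi.add_apply] at this ⊢; omega
  rw [chainVal_eq c hc hcof p n j _ h]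
  obtain ⟨A, B, hdA, hdC, hdB, h1, h2, hW⟩ := seg_spec (c j) p n _ h
  have h2' : Λ.s (Λ.comp A (seg (c j) p n _ h)) = Λ.r B := by
    rw [Λ.s_comp A _ h1]; exact h2
  have hsB : Λ.s B = Λ.s (c j) := by rw [← hW, Λ.s_comp _ _ h2']
  rw [h2]
  exact hT.backward_closed (Λ.r B) (Λ.d_r B) (Λ.s (c j)) (hsc j) ⟨B, rfl, hsB⟩

noncomputable def ofChain (c : ℕ → Λ.Path)
    (hc : ∀ j, ∃ e, Λ.s (c j) = Λ.r e ∧ c (j + 1) = Λ.comp (c j) e)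
    (hcof : ∀ m : Fin k → ℕ, ∃ j, ∀ i, m i ≤ Λ.d (c j) i) : InfPath Λ where
  val := chainVal c hcof
  d_val := chainVal_d c hcof
  r_val := chainVal_r c hc hcof
  s_val := chainVal_s c hc hcof
  comp_val := chainVal_comp c hc hcof

end Chain
end KGraph
namespace KGraph

variable {k : ℕ} {Λ : KGraph k}

section Prepend

noncomputable def prependC (lam : Λ.Path) (z : InfPath Λ) : ℕ → Λ.Path :=
  fun j => Λ.comp lam (z.val 0 fun _ => j)

lemma prependC_r (lam : Λ.Path) (z : InfPath Λ) (hs : Λ.s lam = z.val 0 0) (j : ℕ) :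
    Λ.s lam = Λ.r (z.val 0 fun _ => j) := by rw [z.r_val]; exact hs

lemma prependC_hc (lam : Λ.Path) (z : InfPath Λ) (hs : Λ.s lam = z.val 0 0) :
    ∀ j, ∃ e, Λ.s (prependC lam z j) = Λ.r e ∧
      prependC lam z (j + 1) = Λ.comp (prependC lam z j) e := by
  intro j
  refine ⟨z.val (0 + fun _ => j) (fun _ => 1), ?_, ?_⟩
  · show Λ.s (Λ.comp lam (z.val 0 fun _ => j)) = _
    rw [Λ.s_comp _ _ (prependC_r lam z hs j), z.s_val, z.r_val]
  · show Λ.comp lam (z.val 0 fun _ => (j + 1)) =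
      Λ.comp (Λ.comp lam (z.val 0 fun _ => j)) _
    have hidx : (fun _ => (j + 1) : Fin k → ℕ) = (fun _ => j) + fun _ => 1 :=
      funext fun i => rfl
    rw [hidx, ← z.comp_val 0 (fun _ => j) (fun _ => 1),
      ← Λ.comp_assoc lam (z.val 0 fun _ => j) _ (prependC_r lam z hs j)
        (by rw [z.s_val, z.r_val])]

lemma prependC_hcof (lam : Λ.Path) (z : InfPath Λ) (hs : Λ.s lam = z.val 0 0) :
    ∀ m : Fin k → ℕ, ∃ j, ∀ i, m i ≤ Λ.d (prependC lam z j) i := by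
  intro m
  refine ⟨∑ i, m i, fun i => ?_⟩
  have h1 : m i ≤ ∑ i, m i :=
    Finset.single_le_sum (f := m) (fun _ _ => Nat.zero_le _) (Finset.mem_univ i)
  have hd : Λ.d (prependC lam z (∑ i, m i)) = Λ.d lam + fun _ => ∑ i, m i := by
    show Λ.d (Λ.comp lam _) = _
    rw [Λ.d_comp _ _ (prependC_r lam z hs _), z.d_val]
  rw [hd]
  simp only [Pi.add_apply]
  omega

noncomputable def prepend (lam : Λ.Path) (z : InfPath Λ) (hs : Λ.s lam = z.val 0 0) :
    InfPath Λ :=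
  ofChain (prependC lam z) (prependC_hc lam z hs) (prependC_hcof lam z hs)

lemma prepend_val (lam : Λ.Path) (z : InfPath Λ) (hs : Λ.s lam = z.val 0 0)
    (n : Fin k → ℕ) :
    (prepend lam z hs).val 0 (Λ.d lam + n) = Λ.comp lam (z.val 0 n) := by
  have hni : ∀ i, n i ≤ ∑ i, n i :=
    fun i => Finset.single_le_sum (f := n) (fun _ _ => Nat.zero_le _) (Finset.mem_univ i)
  have hd : Λ.d (prependC lam z (∑ i, n i)) = Λ.d lam + fun _ => ∑ i, n i := by
    show Λ.d (Λ.comp lam _) = _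
    rw [Λ.d_comp _ _ (prependC_r lam z hs _), z.d_val]
  have h : Λ.d (prependC lam z (∑ i, n i)) =
      0 + (Λ.d lam + n) + fun i => (∑ i, n i) - n i := by
    rw [hd]; funext i
    simp only [Pi.add_apply, Pi.zero_apply]
    have := hni i; omega
  show chainVal (prependC lam z) (prependC_hcof lam z hs) 0 (Λ.d lam + n) = _
  rw [chainVal_eq (prependC lam z) (prependC_hc lam z hs) (prependC_hcof lam z hs)
    0 (Λ.d lam + n) (∑ i, n i) _ h]
  have hnt : n + (fun i => (∑ i, n i) - n i) = fun _ => ∑ i, n i := by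
    funext i; simp only [Pi.add_apply]; have := hni i; omega
  refine seg_init _ _ _ h (C := Λ.comp lam (z.val 0 n))
    (B := z.val (0 + n) fun i => (∑ i, n i) - n i)
    (by rw [Λ.d_comp _ _ (by rw [z.r_val]; exact hs), z.d_val]) (z.d_val _ _)
    (by rw [Λ.s_comp _ _ (by rw [z.r_val]; exact hs), z.s_val, z.r_val]) ?_
  show Λ.comp (Λ.comp lam (z.val 0 n)) _ = prependC lam z (∑ i, n i)
  rw [Λ.comp_assoc lam _ _ (by rw [z.r_val]; exact hs) (by rw [z.s_val, z.r_val]),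
    z.comp_val, hnt]
  rfl

end Prepend

section TailPath

variable {T : Set Λ.Path}

noncomputable def vchain (hT : MaximalTail Λ T) (v₀ : Λ.Path) (hv : v₀ ∈ T) :
    ℕ → {w : Λ.Path // Λ.s w ∈ T}
  | 0 => ⟨v₀, by rw [s_vertex (hT.vertex v₀ hv)]; exact hv⟩
  | j + 1 =>
    ⟨Λ.comp (vchain hT v₀ hv j).1
        (hT.reaches _ (vchain hT v₀ hv j).2 fun _ => 1).choose, by
      have hspec := (hT.reaches _ (vchain hT v₀ hv j).2 fun _ => 1).choose_spec
      rw [Λ.s_comp _ _ hspec.1.symm]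
      exact hspec.2.2⟩

lemma vchain_hc (hT : MaximalTail Λ T) (v₀ : Λ.Path) (hv : v₀ ∈ T) :
    ∀ j, ∃ e, Λ.s (vchain hT v₀ hv j).1 = Λ.r e ∧
      (vchain hT v₀ hv (j + 1)).1 = Λ.comp (vchain hT v₀ hv j).1 e := by
  intro j
  exact ⟨(hT.reaches _ (vchain hT v₀ hv j).2 fun _ => 1).choose,
    (hT.reaches _ (vchain hT v₀ hv j).2 fun _ => 1).choose_spec.1.symm, rfl⟩

lemma vchain_d (hT : MaximalTail Λ T) (v₀ : Λ.Path) (hv : v₀ ∈ T) (j : ℕ) :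
    Λ.d (vchain hT v₀ hv j).1 = fun _ => j := by
  induction j with
  | zero =>
    show Λ.d v₀ = _
    rw [hT.vertex v₀ hv]; rfl
  | succ j ih =>
    have hspec := (hT.reaches _ (vchain hT v₀ hv j).2 fun _ => 1).choose_spec
    show Λ.d (Λ.comp (vchain hT v₀ hv j).1 _) = _
    rw [Λ.d_comp _ _ hspec.1.symm, ih, hspec.2.1]
    funext i; simp [Pi.add_apply]

lemma vchain_hcof (hT : MaximalTail Λ T) (v₀ : Λ.Path) (hv : v₀ ∈ T) :
    ∀ m : Fin k → ℕ, ∃ j, ∀ i, m i ≤ Λ.d (vchain hT v₀ hv j).1 i := by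
  intro m
  refine ⟨∑ i, m i, fun i => ?_⟩
  rw [vchain_d hT v₀ hv]
  exact Finset.single_le_sum (f := m) (fun _ _ => Nat.zero_le _) (Finset.mem_univ i)

noncomputable def tailPath (hT : MaximalTail Λ T) (v₀ : Λ.Path) (hv : v₀ ∈ T) :
    InfPath Λ :=
  ofChain (fun j => (vchain hT v₀ hv j).1) (vchain_hc hT v₀ hv) (vchain_hcof hT v₀ hv)

lemma tailPath_inSub (hT : MaximalTail Λ T) (v₀ : Λ.Path) (hv : v₀ ∈ T) :
    (tailPath hT v₀ hv).inSub (Λ.tailPaths T) := by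
  intro p n
  exact chainVal_s_mem hT _ (vchain_hc hT v₀ hv) (vchain_hcof hT v₀ hv)
    (fun j => (vchain hT v₀ hv j).2) p n

lemma tailPath_00 (hT : MaximalTail Λ T) (v₀ : Λ.Path) (hv : v₀ ∈ T) :
    (tailPath hT v₀ hv).val 0 0 = v₀ := by
  have hv0 : Λ.d (vchain hT v₀ hv 0).1 = 0 := hT.vertex v₀ hv
  have h : Λ.d (vchain hT v₀ hv 0).1 = 0 + 0 + 0 := by rw [hv0]; abel
  show chainVal (fun j => (vchain hT v₀ hv j).1) (vchain_hcof hT v₀ hv) 0 0 = v₀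
  rw [chainVal_eq _ (vchain_hc hT v₀ hv) (vchain_hcof hT v₀ hv) 0 0 0 0 h]
  refine seg_init _ _ _ h (C := v₀) (B := v₀) (hT.vertex v₀ hv) (hT.vertex v₀ hv)
    (by rw [s_vertex (hT.vertex v₀ hv)]; exact Λ.eq_r_of_d_eq_zero v₀ (hT.vertex v₀ hv)) ?_
  show Λ.comp v₀ v₀ = v₀
  nth_rewrite 2 [← s_vertex (hT.vertex v₀ hv)]
  exact Λ.comp_id v₀

end TailPath

end KGraph
namespace KGraph

variable {k : ℕ} {Λ : KGraph k} {T : Set Λ.Path}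

lemma pair_lift {lam μ ν : Λ.Path}
    (hrμ : Λ.r μ = Λ.s lam) (hrν : Λ.r ν = Λ.s lam)
    (hp : Λ.IsCyclinePair (Λ.tailPaths T) μ ν) :
    Λ.IsCyclinePair (Λ.tailPaths T) (Λ.comp lam μ) (Λ.comp lam ν) := by
  obtain ⟨hμT, hνT, hsμν, hcond⟩ := hp
  have hl1 : Λ.s lam = Λ.r μ := hrμ.symm
  have hl2 : Λ.s lam = Λ.r ν := hrν.symm
  refine ⟨?_, ?_, ?_, ?_⟩
  · show Λ.s (Λ.comp lam μ) ∈ T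
    rw [Λ.s_comp lam μ hl1]; exact hμT
  · show Λ.s (Λ.comp lam ν) ∈ T
    rw [Λ.s_comp lam ν hl2]; exact hνT
  · rw [Λ.s_comp lam μ hl1, Λ.s_comp lam ν hl2]; exact hsμν
  · intro x hx z hz
    obtain ⟨hz0, hzv⟩ := hz
    have hsν0 : Λ.s ν = x.val 0 0 := by rw [← Λ.s_comp lam ν hl2]; exact hz0
    have hsνr : ∀ n, Λ.s ν = Λ.r (x.val 0 n) := fun n => by rw [x.r_val]; exact hsν0
    have hdlν : Λ.d (Λ.comp lam ν) = Λ.d lam + Λ.d ν := Λ.d_comp lam ν hl2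
    have hstrip : ∀ n, Λ.comp (z.val 0 (Λ.d lam)) (z.val (0 + Λ.d lam) (Λ.d ν + n)) =
        Λ.comp lam (Λ.comp ν (x.val 0 n)) := by
      intro n
      rw [z.comp_val 0 (Λ.d lam) (Λ.d ν + n),
        ← Λ.comp_assoc lam ν (x.val 0 n) hl2 (hsνr n), ← hzv n, hdlν, add_assoc]
    have hkey : ∀ n, z.val 0 (Λ.d lam) = lam ∧
        z.val (0 + Λ.d lam) (Λ.d ν + n) = Λ.comp ν (x.val 0 n) := fun n =>
      comp_inj (by rw [z.s_val, z.r_val])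
        (by rw [Λ.r_comp ν _ (hsνr n)]; exact hl2)
        (z.d_val 0 (Λ.d lam))
        (by rw [z.d_val, Λ.d_comp ν _ (hsνr n), x.d_val]) (hstrip n)
    have hzt : Λ.IsExtension ν x (z.shift (Λ.d lam)) := by
      refine ⟨hsν0, fun n => ?_⟩
      show z.val (0 + Λ.d lam) (Λ.d ν + n) = Λ.comp ν (x.val 0 n)
      exact (hkey n).2
    obtain ⟨hsμ0, hμv⟩ := hcond x hx (z.shift (Λ.d lam)) hzt
    refine ⟨by rw [Λ.s_comp lam μ hl1]; exact hsμ0, fun n => ?_⟩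
    have hidx : Λ.d (Λ.comp lam μ) + n = Λ.d lam + (Λ.d μ + n) := by
      rw [Λ.d_comp lam μ hl1, add_assoc]
    have hμv' : z.val (0 + Λ.d lam) (Λ.d μ + n) = Λ.comp μ (x.val 0 n) := hμv n
    rw [hidx, ← z.comp_val 0 (Λ.d lam) (Λ.d μ + n), (hkey 0).1, hμv',
      ← Λ.comp_assoc lam μ (x.val 0 n) hl1 (by rw [x.r_val]; exact hsμ0)]

lemma pair_drop {lam μ ν : Λ.Path}
    (hrμ : Λ.r μ = Λ.s lam) (hrν : Λ.r ν = Λ.s lam)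
    (hμT : Λ.s μ ∈ T) (hνT : Λ.s ν ∈ T)
    (hp : Λ.IsCyclinePair (Λ.tailPaths T) (Λ.comp lam μ) (Λ.comp lam ν)) :
    Λ.IsCyclinePair (Λ.tailPaths T) μ ν := by
  have hl1 : Λ.s lam = Λ.r μ := hrμ.symm
  have hl2 : Λ.s lam = Λ.r ν := hrν.symm
  have hsμν : Λ.s μ = Λ.s ν := by
    have h := hp.2.2.1
    rwa [Λ.s_comp lam μ hl1, Λ.s_comp lam ν hl2] at h
  refine ⟨hμT, hνT, hsμν, ?_⟩
  intro x hx z hz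
  obtain ⟨hsν0, hzv⟩ := hz
  have hsνr : ∀ n, Λ.s ν = Λ.r (x.val 0 n) := fun n => by rw [x.r_val]; exact hsν0
  have hzν : z.val 0 (Λ.d ν) = ν := by
    have h0 := hzv 0
    rw [add_zero] at h0
    rw [h0, ← hsν0, Λ.comp_id]
  have hz00 : Λ.s lam = z.val 0 0 := by
    rw [← z.r_val 0 (Λ.d ν), hzν]; exact hl2
  have hZext : Λ.IsExtension (Λ.comp lam ν) x (prepend lam z hz00) := by
    refine ⟨by rw [Λ.s_comp lam ν hl2]; exact hsν0, fun n => ?_⟩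
    have hidx : Λ.d (Λ.comp lam ν) + n = Λ.d lam + (Λ.d ν + n) := by
      rw [Λ.d_comp lam ν hl2, add_assoc]
    rw [hidx, prepend_val lam z hz00 (Λ.d ν + n), hzv n,
      ← Λ.comp_assoc lam ν _ hl2 (hsνr n)]
  obtain ⟨hsE, hEv⟩ := hp.2.2.2 x hx (prepend lam z hz00) hZext
  have hsμ0 : Λ.s μ = x.val 0 0 := by rw [← Λ.s_comp lam μ hl1]; exact hsE
  refine ⟨hsμ0, fun n => ?_⟩
  have h1 := hEv n
  have hidx : Λ.d (Λ.comp lam μ) + n = Λ.d lam + (Λ.d μ + n) := by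
    rw [Λ.d_comp lam μ hl1, add_assoc]
  rw [hidx, prepend_val lam z hz00 (Λ.d μ + n)] at h1
  have hxr : Λ.s μ = Λ.r (x.val 0 n) := by rw [x.r_val]; exact hsμ0
  have h2 : Λ.comp lam (z.val 0 (Λ.d μ + n)) = Λ.comp lam (Λ.comp μ (x.val 0 n)) := by
    rw [h1, Λ.comp_assoc lam μ _ hl1 hxr]
  exact (comp_inj (by rw [z.r_val]; exact hz00)
    (by rw [Λ.r_comp μ _ hxr]; exact hl1) rfl
    (by rw [z.d_val, Λ.d_comp μ _ hxr, x.d_val]) h2).2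

lemma hereditary (hT : MaximalTail Λ T) (lam : Λ.Path)
    (hslT : Λ.s lam ∈ T) (hrl : Λ.r lam ∈ Λ.HSet T) : Λ.s lam ∈ Λ.HSet T := by
  refine ⟨hslT, ?_⟩
  intro p q hpq μ hrμ hdμ hsμ
  have hpq' : (fun i => ((Λ.d lam + p) i : ℤ) - ((Λ.d lam + q) i : ℤ)) ∈
      Λ.PerPair (Λ.tailPaths T) := by
    have he : (fun i => ((Λ.d lam + p) i : ℤ) - ((Λ.d lam + q) i : ℤ)) =
        fun i => (p i : ℤ) - (q i : ℤ) := by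
      funext i; simp only [Pi.add_apply]; push_cast; ring
    rw [he]; exact hpq
  have hslrμ : Λ.s lam = Λ.r μ := hrμ.symm
  obtain ⟨ν', ⟨hrν', hdν', hpair'⟩, huniq⟩ := hrl.2 (Λ.d lam + p) (Λ.d lam + q) hpq'
    (Λ.comp lam μ) (by rw [Λ.r_comp lam μ hslrμ])
    (by rw [Λ.d_comp lam μ hslrμ, hdμ])
    (by rw [Λ.s_comp lam μ hslrμ]; exact hsμ)
  have hν'T : Λ.s ν' ∈ T := hpair'.2.1
  have hx00 : (tailPath hT (Λ.s ν') hν'T).val 0 0 = Λ.s ν' := tailPath_00 hT _ hν'T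
  set x := tailPath hT (Λ.s ν') hν'T with hxdef
  have hxin : x.inSub (Λ.tailPaths T) := tailPath_inSub hT _ hν'T
  have hzext : Λ.IsExtension ν' x (prepend ν' x hx00.symm) :=
    ⟨hx00.symm, fun n => prepend_val ν' x hx00.symm n⟩
  set z := prepend ν' x hx00.symm with hzdef
  have hext := hpair'.2.2.2 x hxin z hzext
  have hzq : z.val 0 (Λ.d lam + q) = ν' := by
    have h0 := hzext.2 0
    rw [add_zero, hdν'] at h0
    rw [h0, hx00, Λ.comp_id]
  have hzp : z.val 0 (Λ.d lam + p) = Λ.comp lam μ := by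
    have h0 := hext.2 0
    rw [add_zero, Λ.d_comp lam μ hslrμ, hdμ] at h0
    rw [h0, hx00, ← hpair'.2.2.1, Λ.comp_id]
  have hcompp : Λ.comp (z.val 0 (Λ.d lam)) (z.val (0 + Λ.d lam) p) = Λ.comp lam μ := by
    rw [z.comp_val 0 (Λ.d lam) p, hzp]
  have hz0l : z.val 0 (Λ.d lam) = lam ∧ z.val (0 + Λ.d lam) p = μ :=
    comp_inj (by rw [z.s_val, z.r_val]) hslrμ (z.d_val 0 (Λ.d lam))
      (by rw [z.d_val]; exact hdμ.symm) hcompp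
  set ν₁ := z.val (0 + Λ.d lam) q with hν₁def
  have hcompν : Λ.comp lam ν₁ = ν' := by
    rw [← hz0l.1, z.comp_val 0 (Λ.d lam) q]; exact hzq
  have hrν₁ : Λ.r ν₁ = Λ.s lam := by
    rw [z.r_val, ← z.s_val 0 (Λ.d lam), hz0l.1]
  have hdν₁ : Λ.d ν₁ = q := z.d_val _ _
  have hsν₁T : Λ.s ν₁ ∈ T := by
    have he : Λ.s ν₁ = Λ.s ν' := by rw [← hcompν, Λ.s_comp lam ν₁ hrν₁.symm]
    rw [he]; exact hν'T
  have hpair₁ : Λ.IsCyclinePair (Λ.tailPaths T) μ ν₁ := by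
    refine pair_drop hrμ hrν₁ hsμ hsν₁T ?_
    rw [hcompν]; exact hpair'
  refine ⟨ν₁, ⟨hrν₁, hdν₁, hpair₁⟩, ?_⟩
  rintro ν₂ ⟨hrν₂, hdν₂, hpair₂⟩
  have hlift : Λ.IsCyclinePair (Λ.tailPaths T) (Λ.comp lam μ) (Λ.comp lam ν₂) :=
    pair_lift hrμ hrν₂ hpair₂
  have he := huniq (Λ.comp lam ν₂) ⟨by rw [Λ.r_comp lam ν₂ hrν₂.symm],
    by rw [Λ.d_comp lam ν₂ hrν₂.symm, hdν₂], hlift⟩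
  have he2 : Λ.comp lam ν₂ = Λ.comp lam ν₁ := he.trans hcompν.symm
  exact (comp_inj hrν₂.symm hrν₁.symm rfl (hdν₂.trans hdν₁.symm) he2).2

end KGraph
/-- For a pseudo free self-similar `k`-graph `(G, Λ)` with `g · v = v` for
all vertices `v`, and a maximal tail `T` of `Λ`: if every cycline triple of
`(G, ΛT)` is a cycline pair (i.e. has group element `1`), then every cycline
triple of `(G, H_T ΛT)` is a cycline pair. -/
theorem cycline_triples_of_corner_are_pairs
    {k : ℕ} (G : Type) [Group G] [Countable G] (Λ : KGraph k)
    (hRF : Λ.RowFinite) (hSF : Λ.SourceFree)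
    (S : SelfSimilarSys k G Λ) (hPF : S.PseudoFree)
    (hfix : ∀ g v, Λ.IsVertex v → S.act g v = v)
    (T : Set Λ.Path) (hT : MaximalTail Λ T)
    (hcyc : ∀ μ g ν, S.IsCyclineTriple (Λ.tailPaths T) μ g ν → g = 1) :
    ∀ μ g ν, S.IsCyclineTriple (Λ.cornerPaths T (Λ.HSet T)) μ g ν → g = 1 := by
  rintro μ g ν ⟨hμc, hνc, hsact, hcond⟩
  obtain ⟨hμT, hμH⟩ := hμc
  obtain ⟨hνT, hνH⟩ := hνc
  have hsνH : Λ.s ν ∈ Λ.HSet T := KGraph.hereditary hT ν hνT hνH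
  apply hcyc μ g ν
  refine ⟨hμT, hνT, hsact, ?_⟩
  intro x hx hx0 y hy z hz
  refine hcond x ?_ hx0 y hy z hz
  intro p n
  refine ⟨hx p n, ?_⟩
  rw [x.r_val p n]
  have h1 : Λ.r (x.val 0 p) ∈ Λ.HSet T := by
    rw [x.r_val, ← hx0]; exact hsνH
  have h2 : Λ.s (x.val 0 p) ∈ Λ.HSet T := KGraph.hereditary hT (x.val 0 p) (hx 0 p) h1
  have h3 : Λ.s (x.val 0 p) = x.val p 0 := by rw [x.s_val, zero_add]
  rwa [h3] at h2
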